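/- Let A ≪ B in 𝕀ℝ and let F : 𝕀_{[A,B]} → 𝕀ℝ be continuous with respect to the Moore metric d_M. Define the left and right spectra F_l, F_r : [a̲,b̲] → ℝ by F_l(x) = π₁ F([x, ā + ((b̄−ā)/(b̲−a̲))(x−a̲)]) and F_r(x) = π₂ F([x, ā + ((b̄−ā)/(b̲−a̲))(x−a̲)]). Then ∫̲_A^B F(X)dX = [∫_{a̲}^{b̲} F_l(x)dx, ∫_{a̲}^{b̲} F_r(x)dx] · (d_M(A,B)/(b̲−a̲)) and ∫̄_A^B F(X)dX equals the same interval. -/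

import Mathlib

/-- `𝕀ℝ`: the set of nonempty closed bounded real intervals, identified with
pairs `(lo, hi) ∈ ℝ × ℝ` with `lo ≤ hi`.  The subtype order inherited from the
product order on `ℝ × ℝ` is exactly the Kulisch–Miranker order, and the
inherited metric (sup metric of `ℝ × ℝ`) is exactly the Moore metric `d_M`. -/
abbrev IR : Type := {p : ℝ × ℝ // p.1 ≤ p.2}

namespace IR

/-- Left endpoint projection `π₁`. -/
def lo (A : IR) : ℝ := A.val.1

/-- Right endpoint projection `π₂`. -/
def hi (A : IR) : ℝ := A.val.2

/-- The strict Kulisch–Miranker order `A ≪ B`. -/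
def sll (A B : IR) : Prop := lo A < lo B ∧ hi A < hi B

/-- The Moore metric `d_M`. -/
noncomputable def dM (A B : IR) : ℝ := max |lo B - lo A| |hi B - hi A|

/-- `𝕀_{[A,B]} = {X ∈ 𝕀ℝ : A ≤ X ≤ B}`. -/
def box (A B : IR) : Set IR := {X : IR | A ≤ X ∧ X ≤ B}

/-- The interval `[u,v]` (with a junk degenerate value if `u > v`). -/
noncomputable def mkI (u v : ℝ) : IR := if h : u ≤ v then ⟨(u, v), h⟩ else ⟨(u, u), le_rfl⟩

/-- The point `A + t(B - A)` on the segment from `A` to `B`. -/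
noncomputable def seg (A B : IR) (t : ℝ) : IR :=
  mkI (lo A + t * (lo B - lo A)) (hi A + t * (hi B - hi A))

/-- Componentwise infimum of a set of intervals, as a pair of reals. -/
noncomputable def infS (S : Set IR) : ℝ × ℝ := (sInf (lo '' S), sInf (hi '' S))

/-- Componentwise supremum of a set of intervals, as a pair of reals. -/
noncomputable def supS (S : Set IR) : ℝ × ℝ := (sSup (lo '' S), sSup (hi '' S))

/-- A partition `A = P₀ ≪ P₁ ≪ ⋯ ≪ P_N = B` of `𝕀_{[A,B]}`, described by its
parameters `0 = t₀ < t₁ < ⋯ < t_N = 1` (so that `P_k = A + t_k (B - A)`). -/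
structure Partition where
  n : ℕ
  npos : 0 < n
  t : ℕ → ℝ
  t0 : t 0 = 0
  tn : t n = 1
  mono : ∀ i < n, t i < t (i + 1)

/-- The set of parameters of a partition. -/
def Partition.pts (P : Partition) : Set ℝ := P.t '' Set.Iic P.n

/-- The set of points `P_k = A + t_k(B-A)` of a partition of `𝕀_{[A,B]}`. -/
noncomputable def Partition.ipts (A B : IR) (P : Partition) : Set IR :=
  (fun i => seg A B (P.t i)) '' Set.Iic P.n

/-- Lower Riemann sum `σ(F, 𝒫)` (as a pair of reals; interval sums are
componentwise and `λ • [u,v] = [λu, λv]` for the scalars `λ = d_M ≥ 0`). -/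
noncomputable def lowerSum (A B : IR) (F : IR → IR) (P : Partition) : ℝ × ℝ :=
  ∑ k ∈ Finset.range P.n,
    dM (seg A B (P.t k)) (seg A B (P.t (k + 1))) •
      infS (F '' box (seg A B (P.t k)) (seg A B (P.t (k + 1))))

/-- Upper Riemann sum `Σ(F, 𝒫)`. -/
noncomputable def upperSum (A B : IR) (F : IR → IR) (P : Partition) : ℝ × ℝ :=
  ∑ k ∈ Finset.range P.n,
    dM (seg A B (P.t k)) (seg A B (P.t (k + 1))) •
      supS (F '' box (seg A B (P.t k)) (seg A B (P.t (k + 1))))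

/-- The lower integral `∫̲_A^B F(X)dX`: componentwise supremum of the lower
Riemann sums over all partitions. -/
noncomputable def lowerInt (A B : IR) (F : IR → IR) : ℝ × ℝ :=
  (sSup (Set.range fun P : Partition => (lowerSum A B F P).1),
   sSup (Set.range fun P : Partition => (lowerSum A B F P).2))

/-- The upper integral `∫̄_A^B F(X)dX`: componentwise infimum of the upper
Riemann sums over all partitions. -/
noncomputable def upperInt (A B : IR) (F : IR → IR) : ℝ × ℝ :=
  (sInf (Set.range fun P : Partition => (upperSum A B F P).1),
   sInf (Set.range fun P : Partition => (upperSum A B F P).2))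

/-- `F` is bounded on `𝕀_{[A,B]}` (order bounded, equivalently metrically
bounded). -/
def BoundedOn (F : IR → IR) (A B : IR) : Prop :=
  ∃ C D : IR, ∀ X ∈ box A B, C ≤ F X ∧ F X ≤ D

end IR

namespace IR

/-- The left spectrum `F_l(x) = π₁ F([x, ā + ((b̄−ā)/(b̲−a̲))(x−a̲)])`. -/
noncomputable def specL (A B : IR) (F : IR → IR) (x : ℝ) : ℝ :=
  lo (F (mkI x (hi A + ((hi B - hi A) / (lo B - lo A)) * (x - lo A))))

/-- The right spectrum `F_r(x) = π₂ F([x, ā + ((b̄−ā)/(b̲−a̲))(x−a̲)])`. -/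
noncomputable def specR (A B : IR) (F : IR → IR) (x : ℝ) : ℝ :=
  hi (F (mkI x (hi A + ((hi B - hi A) / (lo B - lo A)) * (x - lo A))))

end IR

namespace IR

variable {A B : IR}

lemma lo_le_hi (A : IR) : lo A ≤ hi A := A.prop

lemma le_iff {X Y : IR} : X ≤ Y ↔ lo X ≤ lo Y ∧ hi X ≤ hi Y := Iff.rfl

lemma dM_eq_dist (X Y : IR) : dM X Y = dist X Y := by
  rw [Subtype.dist_eq, Prod.dist_eq, Real.dist_eq, Real.dist_eq, dM,
    abs_sub_comm (lo Y), abs_sub_comm (hi Y)]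
  rfl

lemma mkI_val {u v : ℝ} (h : u ≤ v) : (mkI u v).val = (u, v) := by simp [mkI, h]
lemma mkI_lo {u v : ℝ} (h : u ≤ v) : lo (mkI u v) = u := by simp [lo, mkI_val h]
lemma mkI_hi {u v : ℝ} (h : u ≤ v) : hi (mkI u v) = v := by simp [hi, mkI_val h]

variable {A B : IR}

lemma seg_ok (h : sll A B) {t : ℝ} (ht : t ∈ Set.Icc (0:ℝ) 1) :
    lo A + t * (lo B - lo A) ≤ hi A + t * (hi B - hi A) := by
  obtain ⟨h0, h1⟩ := ht
  nlinarith [lo_le_hi A, lo_le_hi B]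

lemma seg_lo (h : sll A B) {t : ℝ} (ht : t ∈ Set.Icc (0:ℝ) 1) :
    lo (seg A B t) = lo A + t * (lo B - lo A) := mkI_lo (seg_ok h ht)

lemma seg_hi (h : sll A B) {t : ℝ} (ht : t ∈ Set.Icc (0:ℝ) 1) :
    hi (seg A B t) = hi A + t * (hi B - hi A) := mkI_hi (seg_ok h ht)

lemma seg_mem_box (h : sll A B) {t : ℝ} (ht : t ∈ Set.Icc (0:ℝ) 1) :
    seg A B t ∈ box A B := by
  obtain ⟨h0, h1⟩ := ht
  refine ⟨le_iff.mpr ⟨?_, ?_⟩, le_iff.mpr ⟨?_, ?_⟩⟩ <;>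
    simp only [seg_lo h ⟨h0, h1⟩, seg_hi h ⟨h0, h1⟩] <;> nlinarith [h.1, h.2]

lemma seg_le_seg (h : sll A B) {t t' : ℝ} (ht : t ∈ Set.Icc (0:ℝ) 1)
    (ht' : t' ∈ Set.Icc (0:ℝ) 1) (htt' : t ≤ t') : seg A B t ≤ seg A B t' := by
  refine le_iff.mpr ⟨?_, ?_⟩ <;>
    simp only [seg_lo h ht, seg_hi h ht', seg_lo h ht', seg_hi h ht] <;> nlinarith [h.1, h.2]

lemma box_seg_subset (h : sll A B) {t t' : ℝ} (ht : t ∈ Set.Icc (0:ℝ) 1)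
    (ht' : t' ∈ Set.Icc (0:ℝ) 1) :
    box (seg A B t) (seg A B t') ⊆ box A B := fun X hX =>
  ⟨le_trans (seg_mem_box h ht).1 hX.1, le_trans hX.2 (seg_mem_box h ht').2⟩

lemma dM_AB (h : sll A B) : dM A B = max (lo B - lo A) (hi B - hi A) := by
  rw [dM, abs_of_nonneg (by linarith [h.1]), abs_of_nonneg (by linarith [h.2])]

lemma dM_AB_pos (h : sll A B) : 0 < dM A B := by
  rw [dM_AB h]; exact lt_max_of_lt_left (by linarith [h.1])

lemma dM_seg (h : sll A B) {t t' : ℝ} (ht : t ∈ Set.Icc (0:ℝ) 1)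
    (ht' : t' ∈ Set.Icc (0:ℝ) 1) (htt' : t ≤ t') :
    dM (seg A B t) (seg A B t') = (t' - t) * dM A B := by
  rw [dM, seg_lo h ht, seg_hi h ht, seg_lo h ht', seg_hi h ht', dM_AB h,
    mul_max_of_nonneg _ _ (by linarith)]
  congr 1
  · rw [abs_of_nonneg (by nlinarith [h.1])]; ring
  · rw [abs_of_nonneg (by nlinarith [h.2])]; ring

lemma dist_le_of_mem_box {C D X : IR} (hX : X ∈ box C D) : dist X C ≤ dM C D := by
  obtain ⟨hC, hD⟩ := hX
  obtain ⟨h1, h2⟩ := le_iff.mp hC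
  obtain ⟨h3, h4⟩ := le_iff.mp hD
  rw [← dM_eq_dist, dM, dM]
  apply max_le_max <;> rw [abs_sub_comm] <;>
    · rw [abs_of_nonneg (by linarith), abs_of_nonneg (by linarith)]; linarith

lemma Partition.t_mono (P : Partition) : ∀ {i j : ℕ}, i ≤ j → j ≤ P.n → P.t i ≤ P.t j := by
  intro i j hij hj
  induction j with
  | zero => cases Nat.le_zero.mp hij; exact le_rfl
  | succ m ih =>
    rcases Nat.eq_or_lt_of_le hij with rfl | hlt
    · exact le_rfl
    · exact le_trans (ih (Nat.lt_succ_iff.mp hlt) (le_trans (Nat.le_succ m) hj))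
        (le_of_lt (P.mono m (by omega)))

lemma Partition.t_mem (P : Partition) {k : ℕ} (hk : k ≤ P.n) : P.t k ∈ Set.Icc (0:ℝ) 1 := by
  constructor
  · rw [← P.t0]; exact P.t_mono (Nat.zero_le k) hk
  · rw [← P.tn]; exact P.t_mono hk le_rfl

noncomputable def defaultPartition : Partition :=
  ⟨1, one_pos, fun i => if i = 0 then 0 else 1, by simp, by simp, by
    intro i hi; interval_cases i; simp⟩

instance : Nonempty Partition := ⟨defaultPartition⟩

variable {A B : IR}

lemma isCompact_box (A B : IR) : IsCompact (box A B) := by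
  have hcl : IsClosed {p : ℝ × ℝ | p.1 ≤ p.2} := isClosed_le continuous_fst continuous_snd
  have : box A B = Subtype.val ⁻¹' Set.Icc A.val B.val := rfl
  rw [this]
  exact hcl.isClosedEmbedding_subtypeVal.isCompact_preimage isCompact_Icc

lemma box_nonempty {C D : IR} (hCD : C ≤ D) : (box C D).Nonempty := ⟨C, le_rfl, hCD⟩

/-- continuity of the segment parametrization -/
lemma continuousOn_seg (h : sll A B) : ContinuousOn (seg A B) (Set.Icc (0:ℝ) 1) := by
  have hc : Continuous (fun t : ℝ =>
      (⟨(lo A + t * (lo B - lo A), max (lo A + t * (lo B - lo A)) (hi A + t * (hi B - hi A))),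
        le_max_left _ _⟩ : IR)) := by
    apply Continuous.subtype_mk
    fun_prop
  apply hc.continuousOn.congr
  intro t ht
  apply Subtype.ext
  simp only [seg]
  rw [mkI_val (seg_ok h ht)]
  simp [max_eq_right (seg_ok h ht)]

/-- the diagonal point as a segment point -/
lemma mkI_diag_eq_seg (h : sll A B) (x : ℝ) :
    mkI x (hi A + ((hi B - hi A) / (lo B - lo A)) * (x - lo A)) =
      seg A B ((x - lo A) / (lo B - lo A)) := by
  have hne : lo B - lo A ≠ 0 := by have := h.1; intro hc; linarith
  unfold seg
  congr 1
  · field_simp; ring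
  · field_simp

lemma tau_mem (h : sll A B) {x : ℝ} (hx : x ∈ Set.Icc (lo A) (lo B)) :
    (x - lo A) / (lo B - lo A) ∈ Set.Icc (0:ℝ) 1 := by
  have hpos : (0:ℝ) < lo B - lo A := by linarith [h.1]
  obtain ⟨h1, h2⟩ := hx
  constructor
  · exact div_nonneg (by linarith) (by linarith)
  · rw [div_le_one hpos]; linarith

noncomputable def phiF (A B : IR) (g : IR → ℝ) (x : ℝ) : ℝ :=
  g (mkI x (hi A + ((hi B - hi A) / (lo B - lo A)) * (x - lo A)))

noncomputable def lsum (A B : IR) (g : IR → ℝ) (P : Partition) : ℝ :=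
  ∑ k ∈ Finset.range P.n,
    dM (seg A B (P.t k)) (seg A B (P.t (k + 1))) *
      sInf (g '' box (seg A B (P.t k)) (seg A B (P.t (k + 1))))

variable {A B : IR}

lemma continuousOn_phi (h : sll A B) {g : IR → ℝ} (hg : ContinuousOn g (box A B)) :
    ContinuousOn (phiF A B g) (Set.Icc (lo A) (lo B)) := by
  have h1 : ContinuousOn (fun x : ℝ => seg A B ((x - lo A) / (lo B - lo A)))
      (Set.Icc (lo A) (lo B)) :=
    (continuousOn_seg h).comp (Continuous.continuousOn (by fun_prop))
      (fun x hx => tau_mem h hx)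
  have h2 := hg.comp h1 (fun x hx => seg_mem_box h (tau_mem h hx))
  exact h2.congr (fun x hx => by rw [Function.comp_apply, phiF, mkI_diag_eq_seg h])

lemma diag_mem_box (h : sll A B) {t t' : ℝ} (ht : t ∈ Set.Icc (0:ℝ) 1)
    (ht' : t' ∈ Set.Icc (0:ℝ) 1) {x : ℝ}
    (hx1 : lo A + t * (lo B - lo A) ≤ x) (hx2 : x ≤ lo A + t' * (lo B - lo A)) :
    mkI x (hi A + ((hi B - hi A) / (lo B - lo A)) * (x - lo A)) ∈
      box (seg A B t) (seg A B t') := by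
  have hba : (0:ℝ) < lo B - lo A := by linarith [h.1]
  have htt' : t ≤ t' := by nlinarith
  have hτ1 : t ≤ (x - lo A) / (lo B - lo A) := by
    rw [le_div_iff₀ hba]; linarith
  have hτ2 : (x - lo A) / (lo B - lo A) ≤ t' := by
    rw [div_le_iff₀ hba]; linarith
  have hτ : (x - lo A) / (lo B - lo A) ∈ Set.Icc (0:ℝ) 1 :=
    ⟨le_trans ht.1 hτ1, le_trans hτ2 ht'.2⟩
  rw [mkI_diag_eq_seg h]
  exact ⟨seg_le_seg h ht hτ hτ1, seg_le_seg h hτ ht' hτ2⟩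

lemma xk_mem (h : sll A B) {t : ℝ} (ht : t ∈ Set.Icc (0:ℝ) 1) :
    lo A + t * (lo B - lo A) ∈ Set.Icc (lo A) (lo B) := by
  have hba : (0:ℝ) < lo B - lo A := by linarith [h.1]
  obtain ⟨h0, h1⟩ := ht
  constructor <;> nlinarith

/-- The per-partition upper bound for the lower sum. -/
lemma lsum_le (h : sll A B) {g : IR → ℝ} (hg : ContinuousOn g (box A B)) (P : Partition) :
    lsum A B g P ≤ (dM A B / (lo B - lo A)) * ∫ x in lo A..lo B, phiF A B g x := by
  have hba : (0:ℝ) < lo B - lo A := by linarith [h.1]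
  set c : ℝ := dM A B / (lo B - lo A) with hc
  have hcpos : 0 < c := div_pos (dM_AB_pos h) hba
  obtain ⟨L, hL⟩ : ∃ L, ∀ X ∈ box A B, L ≤ g X := by
    obtain ⟨L, hL⟩ := ((isCompact_box A B).image_of_continuousOn hg).bddBelow
    exact ⟨L, fun X hX => hL (Set.mem_image_of_mem g hX)⟩
  have hphi : ContinuousOn (phiF A B g) (Set.Icc (lo A) (lo B)) := continuousOn_phi h hg
  set xk : ℕ → ℝ := fun k => lo A + P.t k * (lo B - lo A) with hxk
  have hxmem : ∀ k ≤ P.n, xk k ∈ Set.Icc (lo A) (lo B) := fun k hk =>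
    xk_mem h (P.t_mem hk)
  have hint : ∀ k < P.n,
      IntervalIntegrable (phiF A B g) MeasureTheory.volume (xk k) (xk (k + 1)) := by
    intro k hk
    exact ((hphi.mono (Set.uIcc_subset_Icc (hxmem k (le_of_lt hk))
      (hxmem (k+1) hk))).intervalIntegrable)
  have key : ∀ k < P.n,
      dM (seg A B (P.t k)) (seg A B (P.t (k + 1))) *
        sInf (g '' box (seg A B (P.t k)) (seg A B (P.t (k + 1)))) ≤
      c * ∫ x in xk k..xk (k + 1), phiF A B g x := by
    intro k hk
    have htk := P.t_mem (le_of_lt hk)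
    have htk1 := P.t_mem (Nat.succ_le_of_lt hk)
    have htt : P.t k ≤ P.t (k + 1) := le_of_lt (P.mono k hk)
    have hxle : xk k ≤ xk (k + 1) := by simp only [hxk]; nlinarith
    set m : ℝ := sInf (g '' box (seg A B (P.t k)) (seg A B (P.t (k + 1)))) with hm
    have hbdd : BddBelow (g '' box (seg A B (P.t k)) (seg A B (P.t (k + 1)))) :=
      ⟨L, fun y ⟨X, hX, hXy⟩ => hXy ▸ hL X (box_seg_subset h htk htk1 hX)⟩
    have hmle : ∀ x ∈ Set.Icc (xk k) (xk (k + 1)), m ≤ phiF A B g x := by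
      intro x hx
      exact csInf_le hbdd (Set.mem_image_of_mem g
        (diag_mem_box h htk htk1 hx.1 hx.2))
    have h1 : (xk (k + 1) - xk k) * m ≤ ∫ x in xk k..xk (k + 1), phiF A B g x := by
      have := intervalIntegral.integral_mono_on hxle
        (intervalIntegrable_const (c := m)) (hint k hk) hmle
      rwa [intervalIntegral.integral_const, smul_eq_mul] at this
    have h2 : dM (seg A B (P.t k)) (seg A B (P.t (k + 1))) =
        c * (xk (k + 1) - xk k) := by
      rw [dM_seg h htk htk1 htt, hxk, hc]
      field_simp
      ring
    rw [h2, mul_assoc]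
    exact mul_le_mul_of_nonneg_left h1 (le_of_lt hcpos)
  calc lsum A B g P ≤ ∑ k ∈ Finset.range P.n, c * ∫ x in xk k..xk (k + 1), phiF A B g x := by
        apply Finset.sum_le_sum
        intro k hk
        exact key k (Finset.mem_range.mp hk)
    _ = c * ∑ k ∈ Finset.range P.n, ∫ x in xk k..xk (k + 1), phiF A B g x := by
        rw [Finset.mul_sum]
    _ = c * ∫ x in lo A..lo B, phiF A B g x := by
        rw [intervalIntegral.sum_integral_adjacent_intervals hint]
        have e0 : xk 0 = lo A := by simp [hxk, P.t0]
        have en : xk P.n = lo B := by simp [hxk, P.tn]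
        rw [e0, en]

variable {A B : IR}

lemma dM_seg_eq (h : sll A B) {t t' : ℝ} (ht : t ∈ Set.Icc (0:ℝ) 1)
    (ht' : t' ∈ Set.Icc (0:ℝ) 1) (htt' : t ≤ t') :
    dM (seg A B t) (seg A B t') = (dM A B / (lo B - lo A)) *
      ((lo A + t' * (lo B - lo A)) - (lo A + t * (lo B - lo A))) := by
  have hba : (0:ℝ) < lo B - lo A := by linarith [h.1]
  rw [dM_seg h ht ht' htt']
  field_simp
  ring

theorem core_inf (h : sll A B) {g : IR → ℝ} (hg : ContinuousOn g (box A B)) :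
    sSup (Set.range (lsum A B g)) =
      (dM A B / (lo B - lo A)) * ∫ x in lo A..lo B, phiF A B g x := by
  have hba : (0:ℝ) < lo B - lo A := by linarith [h.1]
  set c : ℝ := dM A B / (lo B - lo A) with hc
  have hcpos : 0 < c := div_pos (dM_AB_pos h) hba
  set I : ℝ := ∫ x in lo A..lo B, phiF A B g x with hI
  have hub : ∀ P : Partition, lsum A B g P ≤ c * I := fun P => lsum_le h hg P
  have hbddA : BddAbove (Set.range (lsum A B g)) :=
    ⟨c * I, fun y ⟨P, hP⟩ => hP ▸ hub P⟩
  refine le_antisymm (csSup_le (Set.range_nonempty _) (fun y ⟨P, hP⟩ => hP ▸ hub P)) ?_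
  apply le_of_forall_pos_le_add
  intro ε hε
  have huc := (isCompact_box A B).uniformContinuousOn_of_continuous hg
  set ε' : ℝ := ε / (c * (lo B - lo A) + 1) with hε'def
  have hε' : 0 < ε' := by positivity
  obtain ⟨δ, hδ, H⟩ := Metric.uniformContinuousOn_iff.mp huc ε' hε'
  obtain ⟨n0, hn0⟩ := exists_nat_gt (2 * dM A B / δ)
  have hnpos : (0:ℝ) < (n0 + 1 : ℕ) := by positivity
  have hnδ : 2 * (dM A B / (n0 + 1 : ℕ)) < δ := by
    have h1 : 2 * dM A B / δ < ((n0 + 1 : ℕ) : ℝ) := by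
      have : (n0:ℝ) ≤ ((n0 + 1 : ℕ) : ℝ) := by push_cast; linarith
      linarith
    rw [div_lt_iff₀ hδ] at h1
    calc 2 * (dM A B / ((n0 + 1 : ℕ) : ℝ)) = (2 * dM A B) / ((n0 + 1 : ℕ) : ℝ) := by ring
      _ < δ := by rw [div_lt_iff₀ hnpos]; linarith
  set P : Partition := ⟨n0 + 1, Nat.succ_pos n0, fun i => (i : ℝ) / (n0 + 1 : ℕ),
    by simp, div_self (ne_of_gt hnpos), by
      intro i hi
      exact div_lt_div_of_pos_right (by exact_mod_cast i.lt_succ_self) hnpos⟩ with hPdef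
  set xk : ℕ → ℝ := fun k => lo A + P.t k * (lo B - lo A) with hxk
  have hxmem : ∀ k ≤ P.n, xk k ∈ Set.Icc (lo A) (lo B) := fun k hk => xk_mem h (P.t_mem hk)
  have hphi : ContinuousOn (phiF A B g) (Set.Icc (lo A) (lo B)) := continuousOn_phi h hg
  have hint : ∀ k < P.n,
      IntervalIntegrable (phiF A B g) MeasureTheory.volume (xk k) (xk (k + 1)) :=
    fun k hk => (hphi.mono (Set.uIcc_subset_Icc (hxmem k hk.le)
      (hxmem (k + 1) hk))).intervalIntegrable
  set mk : ℕ → ℝ := fun k =>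
    sInf (g '' box (seg A B (P.t k)) (seg A B (P.t (k + 1)))) with hmk
  have key : ∀ k ∈ Finset.range P.n, (∫ x in xk k..xk (k + 1), phiF A B g x) ≤
      (xk (k + 1) - xk k) * (mk k + ε') := by
    intro k hk'
    have hk : k < P.n := Finset.mem_range.mp hk'
    have htk := P.t_mem hk.le
    have htk1 := P.t_mem (Nat.succ_le_of_lt hk)
    have htt : P.t k ≤ P.t (k + 1) := le_of_lt (P.mono k hk)
    have hxle : xk k ≤ xk (k + 1) := by simp only [hxk]; nlinarith
    have hdMk : dM (seg A B (P.t k)) (seg A B (P.t (k + 1))) = dM A B / (n0 + 1 : ℕ) := by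
      rw [dM_seg h htk htk1 htt]
      have : P.t (k + 1) - P.t k = 1 / (n0 + 1 : ℕ) := by
        show ((k + 1 : ℕ) : ℝ) / (n0 + 1 : ℕ) - (k : ℝ) / (n0 + 1 : ℕ) = 1 / (n0 + 1 : ℕ)
        push_cast
        field_simp
        ring
      rw [this]
      ring
    have hbnd : ∀ x ∈ Set.Icc (xk k) (xk (k + 1)), phiF A B g x ≤ mk k + ε' := by
      intro x hx
      have hDmem := diag_mem_box h htk htk1 hx.1 hx.2
      have hDbox := box_seg_subset h htk htk1 hDmem
      have hlow : phiF A B g x - ε' ≤ mk k := by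
        apply le_csInf ((box_nonempty (seg_le_seg h htk htk1 htt)).image g)
        rintro y ⟨X, hX, rfl⟩
        have hd1 : dist X (seg A B (P.t k)) ≤ dM A B / (n0 + 1 : ℕ) := by
          rw [← hdMk]; exact dist_le_of_mem_box hX
        have hd2 : dist (mkI x (hi A + ((hi B - hi A) / (lo B - lo A)) * (x - lo A)))
            (seg A B (P.t k)) ≤ dM A B / (n0 + 1 : ℕ) := by
          rw [← hdMk]; exact dist_le_of_mem_box hDmem
        have hdist : dist X (mkI x (hi A + ((hi B - hi A) / (lo B - lo A)) * (x - lo A))) < δ := by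
          calc dist X (mkI x (hi A + ((hi B - hi A) / (lo B - lo A)) * (x - lo A)))
              ≤ dist X (seg A B (P.t k)) +
                dist (seg A B (P.t k)) (mkI x (hi A + ((hi B - hi A) / (lo B - lo A)) * (x - lo A))) :=
                dist_triangle _ _ _
            _ ≤ dM A B / (n0 + 1 : ℕ) + dM A B / (n0 + 1 : ℕ) := by
                rw [dist_comm (seg A B (P.t k))]; exact add_le_add hd1 hd2
            _ < δ := by linarith
        have := H X (box_seg_subset h htk htk1 hX) _ hDbox hdist
        rw [Real.dist_eq, abs_lt] at this
        have : g (mkI x (hi A + ((hi B - hi A) / (lo B - lo A)) * (x - lo A))) - ε' ≤ g X := by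
          linarith [this.2]
        exact this
      linarith
    have := intervalIntegral.integral_mono_on hxle (hint k hk)
      (intervalIntegrable_const (c := mk k + ε')) hbnd
    rwa [intervalIntegral.integral_const, smul_eq_mul] at this
  have e0 : xk 0 = lo A := by
    simp only [hxk, P.t0]
    show lo A + 0 * (lo B - lo A) = lo A
    simp
  have en : xk P.n = lo B := by
    simp only [hxk]
    show lo A + ((P.n : ℝ)/((n0+1:ℕ):ℝ)) * (lo B - lo A) = lo B
    rw [show (P.n : ℝ) = ((n0+1:ℕ):ℝ) from rfl, div_self (ne_of_gt hnpos)]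
    ring
  have sum1 : I = ∑ k ∈ Finset.range P.n, ∫ x in xk k..xk (k + 1), phiF A B g x := by
    rw [intervalIntegral.sum_integral_adjacent_intervals hint, e0, en]
  have hSD : ∑ k ∈ Finset.range P.n, (xk (k + 1) - xk k) = lo B - lo A := by
    rw [Finset.sum_range_sub xk, e0, en]
  have expand : ∑ k ∈ Finset.range P.n, c * ((xk (k + 1) - xk k) * (mk k + ε')) =
      lsum A B g P + c * ε' * (lo B - lo A) := by
    have hterm : ∀ k ∈ Finset.range P.n, c * ((xk (k + 1) - xk k) * (mk k + ε')) =
        dM (seg A B (P.t k)) (seg A B (P.t (k + 1))) * mk k + c * ε' * (xk (k + 1) - xk k) := by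
      intro k hk'
      have hk : k < P.n := Finset.mem_range.mp hk'
      rw [dM_seg_eq h (P.t_mem hk.le) (P.t_mem (Nat.succ_le_of_lt hk)) (le_of_lt (P.mono k hk))]
      show c * ((xk (k+1) - xk k) * (mk k + ε')) = c * (xk (k+1) - xk k) * mk k + c * ε' * (xk (k+1) - xk k)
      ring
    rw [Finset.sum_congr rfl hterm, Finset.sum_add_distrib, ← Finset.mul_sum, hSD]
    rfl
  calc c * I = ∑ k ∈ Finset.range P.n, c * (∫ x in xk k..xk (k + 1), phiF A B g x) := by
        rw [sum1, Finset.mul_sum]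
    _ ≤ ∑ k ∈ Finset.range P.n, c * ((xk (k + 1) - xk k) * (mk k + ε')) := by
        apply Finset.sum_le_sum
        intro k hk
        exact mul_le_mul_of_nonneg_left (key k hk) (le_of_lt hcpos)
    _ = lsum A B g P + c * ε' * (lo B - lo A) := expand
    _ ≤ sSup (Set.range (lsum A B g)) + ε := by
        apply add_le_add (le_csSup hbddA ⟨P, rfl⟩)
        have hq : (0:ℝ) < c * (lo B - lo A) := by positivity
        have heq : c * ε' * (lo B - lo A) = (c * (lo B - lo A)) * ε / (c * (lo B - lo A) + 1) := by
          rw [hε'def]; ring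
        rw [heq, div_le_iff₀ (by positivity)]
        nlinarith
noncomputable def usum (A B : IR) (g : IR → ℝ) (P : Partition) : ℝ :=
  ∑ k ∈ Finset.range P.n,
    dM (seg A B (P.t k)) (seg A B (P.t (k + 1))) *
      sSup (g '' box (seg A B (P.t k)) (seg A B (P.t (k + 1))))

variable {A B : IR}

theorem core_sup (h : sll A B) {g : IR → ℝ} (hg : ContinuousOn g (box A B)) :
    sInf (Set.range (usum A B g)) =
      (dM A B / (lo B - lo A)) * ∫ x in lo A..lo B, phiF A B g x := by
  have hgneg : ContinuousOn (fun X => -(g X)) (box A B) := hg.neg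
  obtain ⟨U, hU⟩ : ∃ U, ∀ X ∈ box A B, g X ≤ U := by
    obtain ⟨U, hU⟩ := ((isCompact_box A B).image_of_continuousOn hg).bddAbove
    exact ⟨U, fun X hX => hU (Set.mem_image_of_mem g hX)⟩
  have h1 : ∀ P : Partition, usum A B g P = -(lsum A B (fun X => -(g X)) P) := by
    intro P
    rw [usum, lsum, ← Finset.sum_neg_distrib]
    apply Finset.sum_congr rfl
    intro k hk'
    have hk : k < P.n := Finset.mem_range.mp hk'
    have htk := P.t_mem hk.le
    have htk1 := P.t_mem (Nat.succ_le_of_lt hk)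
    have htt : P.t k ≤ P.t (k + 1) := le_of_lt (P.mono k hk)
    have himg : (fun X => -(g X)) '' box (seg A B (P.t k)) (seg A B (P.t (k + 1))) =
        -(g '' box (seg A B (P.t k)) (seg A B (P.t (k + 1)))) := by
      ext y
      simp only [Set.mem_image, Set.mem_neg]
      constructor
      · rintro ⟨X, hX, rfl⟩; exact ⟨X, hX, by ring⟩
      · rintro ⟨X, hX, hXy⟩; exact ⟨X, hX, by rw [hXy]; ring⟩
    have hne : (g '' box (seg A B (P.t k)) (seg A B (P.t (k + 1)))).Nonempty :=
      (box_nonempty (seg_le_seg h htk htk1 htt)).image g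
    have hbdd : BddAbove (g '' box (seg A B (P.t k)) (seg A B (P.t (k + 1)))) :=
      ⟨U, fun y ⟨X, hX, hXy⟩ => hXy ▸ hU X (box_seg_subset h htk htk1 hX)⟩
    rw [himg, csInf_neg hne hbdd]
    ring
  rw [show usum A B g = fun P => -(lsum A B (fun X => -(g X)) P) from funext h1]
  have h2 : (Set.range fun P => -(lsum A B (fun X => -(g X)) P)) =
      -(Set.range (lsum A B (fun X => -(g X)))) := by
    ext y
    simp only [Set.mem_range, Set.mem_neg]
    constructor
    · rintro ⟨P, rfl⟩; exact ⟨P, by ring⟩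
    · rintro ⟨P, hP⟩; exact ⟨P, by rw [hP]; ring⟩
  rw [h2, csInf_neg (Set.range_nonempty _)
    ⟨(dM A B / (lo B - lo A)) * ∫ x in lo A..lo B, phiF A B (fun X => -(g X)) x,
      fun y ⟨P, hP⟩ => hP ▸ lsum_le h hgneg P⟩,
    core_inf h hgneg]
  have hphi : phiF A B (fun X => -(g X)) = fun x => -(phiF A B g x) := rfl
  rw [hphi, intervalIntegral.integral_neg]
  ring


lemma continuous_lo : Continuous lo := continuous_fst.comp continuous_subtype_val
lemma continuous_hi : Continuous hi := continuous_snd.comp continuous_subtype_val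

variable {A B : IR}

lemma lowerSum_fst (A B : IR) (F : IR → IR) (P : Partition) :
    (lowerSum A B F P).1 = lsum A B (fun X => lo (F X)) P := by
  rw [lowerSum, lsum, Prod.fst_sum]
  apply Finset.sum_congr rfl
  intro k _
  rw [Prod.smul_fst, smul_eq_mul, infS, Set.image_image]

lemma lowerSum_snd (A B : IR) (F : IR → IR) (P : Partition) :
    (lowerSum A B F P).2 = lsum A B (fun X => hi (F X)) P := by
  rw [lowerSum, lsum, Prod.snd_sum]
  apply Finset.sum_congr rfl
  intro k _
  rw [Prod.smul_snd, smul_eq_mul, infS]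
  rw [Set.image_image hi F]

lemma upperSum_fst (A B : IR) (F : IR → IR) (P : Partition) :
    (upperSum A B F P).1 = usum A B (fun X => lo (F X)) P := by
  rw [upperSum, usum, Prod.fst_sum]
  apply Finset.sum_congr rfl
  intro k _
  rw [Prod.smul_fst, smul_eq_mul, supS, Set.image_image]

lemma upperSum_snd (A B : IR) (F : IR → IR) (P : Partition) :
    (upperSum A B F P).2 = usum A B (fun X => hi (F X)) P := by
  rw [upperSum, usum, Prod.snd_sum]
  apply Finset.sum_congr rfl
  intro k _
  rw [Prod.smul_snd, smul_eq_mul, supS]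
  rw [Set.image_image hi F]

end IR

open IR in
/-- Let `A ≪ B` and `F : 𝕀_{[A,B]} → 𝕀ℝ` be continuous w.r.t. the Moore
metric.  Then both the lower and the upper integral of `F` equal
`[∫_{a̲}^{b̲} F_l, ∫_{a̲}^{b̲} F_r] · (d_M(A,B)/(b̲−a̲))`. -/
theorem IR.lower_upper_int_eq_spectra (A B : IR) (h : sll A B) (F : IR → IR)
    (hF : ContinuousOn F (box A B)) :
    lowerInt A B F =
      (dM A B / (lo B - lo A)) •
        ((∫ x in lo A..lo B, specL A B F x), (∫ x in lo A..lo B, specR A B F x)) ∧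
    upperInt A B F =
      (dM A B / (lo B - lo A)) •
        ((∫ x in lo A..lo B, specL A B F x), (∫ x in lo A..lo B, specR A B F x)) := by
  have hglo : ContinuousOn (fun X => lo (F X)) (box A B) :=
    continuous_lo.comp_continuousOn hF
  have hghi : ContinuousOn (fun X => hi (F X)) (box A B) :=
    continuous_hi.comp_continuousOn hF
  have hL : phiF A B (fun X => lo (F X)) = specL A B F := rfl
  have hR : phiF A B (fun X => hi (F X)) = specR A B F := rfl
  constructor
  · apply Prod.ext
    · show sSup (Set.range fun P => (lowerSum A B F P).1) = _
      rw [show (fun P => (lowerSum A B F P).1) = lsum A B (fun X => lo (F X)) from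
        funext (lowerSum_fst A B F), core_inf h hglo, hL, Prod.smul_fst, smul_eq_mul]
    · show sSup (Set.range fun P => (lowerSum A B F P).2) = _
      rw [show (fun P => (lowerSum A B F P).2) = lsum A B (fun X => hi (F X)) from
        funext (lowerSum_snd A B F), core_inf h hghi, hR, Prod.smul_snd, smul_eq_mul]
  · apply Prod.ext
    · show sInf (Set.range fun P => (upperSum A B F P).1) = _
      rw [show (fun P => (upperSum A B F P).1) = usum A B (fun X => lo (F X)) from
        funext (upperSum_fst A B F), core_sup h hglo, hL, Prod.smul_fst, smul_eq_mul]
    · show sInf (Set.range fun P => (upperSum A B F P).2) = _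
      rw [show (fun P => (upperSum A B F P).2) = usum A B (fun X => hi (F X)) from
        funext (upperSum_snd A B F), core_sup h hghi, hR, Prod.smul_snd, smul_eq_mul]
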